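/- Let G and G' be simple graphs, each nonempty, connected and acyclic (i.e. trees), and suppose that every vertex of G and every vertex of G' has countably infinite degree (its set of neighbours is infinite and countable). Then G and G' are isomorphic as simple graphs. -/

import Mathlib

open SimpleGraph

/-- The canonical ℵ₀-regular tree on `List ℕ`: a list is adjacent to any list
obtained from it by consing one element. -/
def natTree : SimpleGraph (List ℕ) where
  Adj l m := (∃ n, m = n :: l) ∨ (∃ n, l = n :: m)
  symm := ⟨fun l m h => h.symm⟩
  loopless := ⟨by
    rintro l (⟨n, h⟩ | ⟨n, h⟩) <;>
      exact absurd (congrArg List.length h) (by simp)⟩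

/-- Labelling of `List ℕ` by vertices of a graph, given a root `r`, an
enumeration `c0` of the neighbours of `r`, and for each pair `(v, p)` an
enumeration `c1 v p` of the neighbours of `v` other than `p`. -/
def treeLabel {V : Type*} (r : V) (c0 : ℕ → V) (c1 : V → V → ℕ → V) : List ℕ → V
  | [] => r
  | [n] => c0 n
  | n :: m :: l => c1 (treeLabel r c0 c1 (m :: l)) (treeLabel r c0 c1 l) n
  termination_by structural l => l

/-- Any tree all of whose vertices have countably infinite degree is isomorphic
to the canonical tree `natTree`. -/
theorem natTree_iso {V : Type*} [Nonempty V] (G : SimpleGraph V)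
    (hc : G.Connected) (hac : G.IsAcyclic)
    (hdeg : ∀ v : V, (G.neighborSet v).Infinite ∧ (G.neighborSet v).Countable) :
    Nonempty (natTree ≃g G) := by
  classical
  obtain ⟨r⟩ := ‹Nonempty V›
  -- enumeration of the neighbours of the root
  have h0 : ∃ c0 : ℕ → V, (∀ n, G.Adj r (c0 n)) ∧ Function.Injective c0 ∧
      ∀ w, G.Adj r w → ∃ n, c0 n = w := by
    haveI : Countable (G.neighborSet r) := (hdeg r).2.to_subtype
    haveI : Infinite (G.neighborSet r) := (hdeg r).1.to_subtype
    obtain ⟨e⟩ : Nonempty (ℕ ≃ G.neighborSet r) := nonempty_equiv_of_countable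
    refine ⟨fun n => (e n : V), fun n => (e n).2, ?_, fun w hw => ?_⟩
    · intro a b hab
      exact e.injective (Subtype.ext hab)
    · exact ⟨e.symm ⟨w, hw⟩, by simp⟩
  -- enumeration of the neighbours of `v` other than `p`
  have h1 : ∀ v p : V, ∃ f : ℕ → V, (∀ n, G.Adj v (f n) ∧ f n ≠ p) ∧
      Function.Injective f ∧ ∀ w, G.Adj v w → w ≠ p → ∃ n, f n = w := by
    intro v p
    haveI : Countable ↥(G.neighborSet v \ {p}) :=
      ((hdeg v).2.mono Set.diff_subset).to_subtype
    haveI : Infinite ↥(G.neighborSet v \ {p}) :=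
      ((hdeg v).1.diff (Set.finite_singleton p)).to_subtype
    obtain ⟨e⟩ : Nonempty (ℕ ≃ ↥(G.neighborSet v \ {p})) := nonempty_equiv_of_countable
    refine ⟨fun n => (e n : V), fun n => ⟨(e n).2.1, (e n).2.2⟩, ?_, fun w hw hwp => ?_⟩
    · intro a b hab
      exact e.injective (Subtype.ext hab)
    · exact ⟨e.symm ⟨w, ⟨hw, hwp⟩⟩, by simp⟩
  obtain ⟨c0, hc0adj, hc0inj, hc0surj⟩ := h0
  choose c1 hc1mem hc1inj hc1surj using h1
  set F : List ℕ → V := treeLabel r c0 c1 with hF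
  -- basic properties of the labelling
  have adj_cons : ∀ (n : ℕ) (l : List ℕ), G.Adj (F l) (F (n :: l)) := by
    intro n l
    match l with
    | [] => exact hc0adj n
    | m :: l' => exact (hc1mem (F (m :: l')) (F l') n).1
  have ne_parent : ∀ (n m : ℕ) (l : List ℕ), F (n :: m :: l) ≠ F l := by
    intro n m l
    exact (hc1mem (F (m :: l)) (F l) n).2
  -- vertices on a geodesic to `r` are closer to `r`
  have mem_supp : ∀ (u : V) (w : G.Walk u r), ∀ x ∈ w.support, G.dist x r ≤ w.length := by
    intro u w x hx
    calc G.dist x r ≤ (w.dropUntil x hx).length := dist_le _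
    _ ≤ w.length := Walk.length_dropUntil_le w hx
  -- adjacent vertices have different distances to the root
  have L0 : ∀ u v : V, G.Adj u v → G.dist u r ≠ G.dist v r := by
    intro u v huv h
    obtain ⟨wu, hwu⟩ := (hc.preconnected u r).exists_walk_length_eq_dist
    obtain ⟨wv, hwv⟩ := (hc.preconnected v r).exists_walk_length_eq_dist
    have hvnot : v ∉ wu.support := by
      intro hv
      have hsplit := congrArg Walk.length (wu.take_spec hv)
      rw [Walk.length_append] at hsplit
      have h1 : 1 ≤ (wu.takeUntil v hv).length := by
        rcases Nat.eq_zero_or_pos (wu.takeUntil v hv).length with h' | h'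
        · exact absurd (Walk.eq_of_length_eq_zero h') huv.ne
        · exact h'
      have h2 : G.dist v r ≤ (wu.dropUntil v hv).length := dist_le _
      omega
    have hpath1 : (Walk.cons huv.symm wu).IsPath :=
      (wu.isPath_of_length_eq_dist hwu).cons hvnot
    have hpath2 : wv.IsPath := wv.isPath_of_length_eq_dist hwv
    have := hac.path_unique ⟨Walk.cons huv.symm wu, hpath1⟩ ⟨wv, hpath2⟩
    have hlen : (Walk.cons huv.symm wu).length = wv.length :=
      congrArg (fun p : G.Path v r => (p : G.Walk v r).length) this
    rw [Walk.length_cons, hwu, hwv, h] at hlen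
    omega
  have Lstep : ∀ u v : V, G.Adj u v →
      G.dist v r = G.dist u r + 1 ∨ G.dist u r = G.dist v r + 1 := by
    intro u v huv
    have h1 : G.dist u r ≤ G.dist u v + G.dist v r := hc.dist_triangle
    have h2 : G.dist v r ≤ G.dist v u + G.dist u r := hc.dist_triangle
    rw [dist_eq_one_iff_adj.mpr huv] at h1
    rw [dist_eq_one_iff_adj.mpr huv.symm] at h2
    have := L0 u v huv
    omega
  -- uniqueness of the parent: a vertex has a unique neighbour closer to `r`
  have L1 : ∀ v p q : V, G.Adj v p → G.Adj v q →
      G.dist p r + 1 = G.dist v r → G.dist q r + 1 = G.dist v r → p = q := by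
    intro v p q hvp hvq hp hq
    obtain ⟨wp, hwp⟩ := (hc.preconnected p r).exists_walk_length_eq_dist
    obtain ⟨wq, hwq⟩ := (hc.preconnected q r).exists_walk_length_eq_dist
    have hvnotp : v ∉ wp.support := by
      intro hv
      have := mem_supp p wp v hv
      omega
    have hvnotq : v ∉ wq.support := by
      intro hv
      have := mem_supp q wq v hv
      omega
    have hpath1 : (Walk.cons hvp wp).IsPath :=
      (wp.isPath_of_length_eq_dist hwp).cons hvnotp
    have hpath2 : (Walk.cons hvq wq).IsPath :=
      (wq.isPath_of_length_eq_dist hwq).cons hvnotq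
    have := hac.path_unique ⟨Walk.cons hvp wp, hpath1⟩ ⟨Walk.cons hvq wq, hpath2⟩
    have h1 := congrArg (fun p : G.Path v r => (p : G.Walk v r).getVert 1) this
    simpa [Walk.getVert_cons_succ] using h1
  -- the distance of a label to the root is the length of the list
  have dist_label : ∀ (k : ℕ) (l : List ℕ), l.length = k → G.dist (F l) r = k := by
    intro k
    induction k using Nat.strong_induction_on with
    | _ k IH =>
      intro l hl
      match l, hl with
      | [], rfl => exact SimpleGraph.dist_self
      | [n], rfl =>
        rcases Lstep r (F [n]) (adj_cons n []) with h | h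
        · rw [h, SimpleGraph.dist_self]; simp
        · rw [SimpleGraph.dist_self] at h; simp at h
      | n :: m :: l', hl =>
        have hlen : (m :: l').length = k - 1 := by simp at hl ⊢; omega
        have hk : 2 ≤ k := by simp at hl; omega
        have hd1 : G.dist (F (m :: l')) r = k - 1 := IH (k - 1) (by omega) _ hlen
        have hd2 : G.dist (F l') r = k - 2 :=
          IH (k - 2) (by omega) l' (by simp at hl; omega)
        rcases Lstep (F (m :: l')) (F (n :: m :: l')) (adj_cons n (m :: l')) with h | h
        · rw [h, hd1]; omega
        · exfalso
          have hne := ne_parent n m l'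
          have hadj1 : G.Adj (F (m :: l')) (F (n :: m :: l')) := adj_cons n (m :: l')
          have hadj2 : G.Adj (F (m :: l')) (F l') := (adj_cons m l').symm
          have : F (n :: m :: l') = F l' := by
            apply L1 (F (m :: l')) _ _ hadj1 hadj2 <;> omega
          exact hne this
  -- injectivity of the labelling
  have inj : ∀ (k : ℕ) (l m : List ℕ), l.length = k → F l = F m → l = m := by
    intro k
    induction k using Nat.strong_induction_on with
    | _ k IH =>
      intro l m hl hlm
      have hml : m.length = k := by
        have h1 := dist_label k l hl
        have h2 := dist_label m.length m rfl
        rw [hlm] at h1; omega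
      match l, m with
      | [], [] => rfl
      | [], n' :: m' => exact absurd hml (by simp [← hl])
      | n :: l', [] => exact absurd hl (by simp [← hml])
      | n :: l', n' :: m' =>
        have hlk : l'.length + 1 = k := by simpa using hl
        have hmk : m'.length + 1 = k := by simpa using hml
        have hadj1 : G.Adj (F (n :: l')) (F l') := (adj_cons n l').symm
        have hadj2 : G.Adj (F (n :: l')) (F m') := hlm ▸ (adj_cons n' m').symm
        have hpar : F l' = F m' := by
          apply L1 (F (n :: l')) _ _ hadj1 hadj2
          · rw [dist_label l'.length l' rfl, dist_label (n :: l').length (n :: l') rfl]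
            simp
          · rw [dist_label m'.length m' rfl, dist_label (n :: l').length (n :: l') rfl]
            simp; omega
        have hlm' : l' = m' := IH l'.length (by omega) l' m' rfl hpar
        subst hlm'
        have hn : n = n' := by
          match l' with
          | [] => exact hc0inj hlm
          | a :: t => exact hc1inj (F (a :: t)) (F t) hlm
        rw [hn]
  -- surjectivity of the labelling
  have surj : ∀ (k : ℕ) (v : V), G.dist v r = k → ∃ l, F l = v := by
    intro k
    induction k using Nat.strong_induction_on with
    | _ k IH =>
      intro v hv
      match k, hv with
      | 0, hv => exact ⟨[], (hc.dist_eq_zero_iff.mp hv).symm⟩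
      | k + 1, hv =>
        obtain ⟨w, hw⟩ := (hc.preconnected v r).exists_walk_length_eq_dist
        rw [hv] at hw
        match w, hw with
        | Walk.nil, hw => exact absurd hw (by simp)
        | Walk.cons (v := u) hadj w', hw =>
          have hw' : w'.length = k := by simpa using hw
          have hu1 : G.dist u r ≤ k := hw' ▸ dist_le w'
          have hu2 : G.dist v r ≤ G.dist v u + G.dist u r := hc.dist_triangle
          rw [dist_eq_one_iff_adj.mpr hadj] at hu2
          have hu : G.dist u r = k := by omega
          obtain ⟨l, hl⟩ := IH k (by omega) u hu
          have hlk : l.length = k := by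
            have := dist_label l.length l rfl
            rw [hl, hu] at this; omega
          match l, hlk with
          | [], hlk =>
            have hr : F ([] : List ℕ) = r := by rw [hF]; rfl
            rw [← hl, hr] at hadj
            obtain ⟨n, hn⟩ := hc0surj v hadj.symm
            exact ⟨[n], hn⟩
          | m :: l', hlk =>
            have hvne : v ≠ F l' := by
              intro h
              have := dist_label l'.length l' rfl
              rw [← h, hv] at this
              simp at hlk
              omega
            obtain ⟨n, hn⟩ := hc1surj (F (m :: l')) (F l') v
              (by rw [← hl] at hadj; exact hadj.symm) hvne
            exact ⟨n :: m :: l', hn⟩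
  -- adjacency is reflected by the labelling
  have back_aux : ∀ l m : List ℕ, G.Adj (F l) (F m) → m.length = l.length + 1 →
      ∃ n, m = n :: l := by
    intro l m hadj hlen
    match m, hlen with
    | [], hlen => exact absurd hlen (by simp)
    | n :: m', hlen =>
      have hm' : m'.length = l.length := by simpa using hlen
      have hpar : F m' = F l := by
        apply L1 (F (n :: m')) _ _ (adj_cons n m').symm hadj.symm
        · rw [dist_label m'.length m' rfl, dist_label (n :: m').length (n :: m') rfl]
          simp
        · rw [dist_label l.length l rfl, dist_label (n :: m').length (n :: m') rfl]
          simp [hm']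
      exact ⟨n, by rw [inj m'.length m' l rfl hpar]⟩
  have back : ∀ l m : List ℕ, G.Adj (F l) (F m) → natTree.Adj l m := by
    intro l m hadj
    rcases Lstep (F l) (F m) hadj with h | h
    · rw [dist_label l.length l rfl, dist_label m.length m rfl] at h
      exact Or.inl (back_aux l m hadj h)
    · rw [dist_label l.length l rfl, dist_label m.length m rfl] at h
      exact Or.inr (back_aux m l hadj.symm h)
  have hbij : Function.Bijective F :=
    ⟨fun l m h => inj l.length l m rfl h, fun v => surj (G.dist v r) v rfl⟩
  refine ⟨{ toEquiv := Equiv.ofBijective F hbij, map_rel_iff' := ?_ }⟩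
  intro l m
  constructor
  · exact back l m
  · rintro (⟨n, rfl⟩ | ⟨n, rfl⟩)
    · exact adj_cons n l
    · exact (adj_cons n m).symm

/-- Any two trees all of whose vertices have countably infinite degree are
isomorphic. -/
theorem trees_countably_infinite_valence_isomorphic
    {V V' : Type*} [Nonempty V] [Nonempty V']
    (G : SimpleGraph V) (G' : SimpleGraph V')
    (hG : G.Connected) (hGac : G.IsAcyclic)
    (hG' : G'.Connected) (hG'ac : G'.IsAcyclic)
    (hdeg : ∀ v : V, (G.neighborSet v).Infinite ∧ (G.neighborSet v).Countable)
    (hdeg' : ∀ v : V', (G'.neighborSet v).Infinite ∧ (G'.neighborSet v).Countable) :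
    Nonempty (G ≃g G') := by
  obtain ⟨e⟩ := natTree_iso G hG hGac hdeg
  obtain ⟨e'⟩ := natTree_iso G' hG' hG'ac hdeg'
  exact ⟨e.symm.trans e'⟩
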